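/- arXiv:2302.00405 — 3 statements merged into one kernel-verified Lean document; each statement's English description precedes it below -/
import Mathlib

section
/- For all n ≥ 1, s(2n) = s(n) + t(n-1), where s and t are the Rudin-Shapiro summatory functions. -/
def rs : ℕ → ℤ
  | 0 => 1
  | (n+1) =>
    if (n+1) % 2 = 0 then rs ((n+1)/2)
    else (-1)^((n+1)/2) * rs ((n+1)/2)
decreasing_by all_goals exact Nat.div_lt_self (Nat.succ_pos n) (by norm_num)

def s (n : ℕ) : ℤ := ∑ i ∈ Finset.range (n+1), rs i

def t (n : ℕ) : ℤ := ∑ i ∈ Finset.range (n+1), (-1)^i * rs i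

lemma rs_even (k : ℕ) : rs (2*k+2) = rs (k+1) := by
  have h1 : (2*k+2) % 2 = 0 := by omega
  have h2 : (2*k+2) / 2 = k+1 := by omega
  rw [show 2*k+2 = (2*k+1)+1 from rfl, rs]
  simp only [show (2*k+1)+1 = 2*k+2 from rfl, h1, h2, if_true]

lemma rs_odd (k : ℕ) : rs (2*k+1) = (-1)^k * rs k := by
  have h1 : (2*k+1) % 2 = 1 := by omega
  have h2 : (2*k+1) / 2 = k := by omega
  rw [rs]
  simp [h1, h2]

theorem stmt0 : ∀ n : ℕ, 1 ≤ n → s (2*n) = s n + t (n-1) := by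
  intro n hn
  induction n with
  | zero => omega
  | succ m ih =>
    rcases Nat.lt_or_ge m 1 with h | hm
    · interval_cases m
      have h0 : rs 0 = 1 := by rw [rs]
      have h1 : rs 1 = 1 := by have := rs_odd 0; simp [h0] at this; simpa using this
      have h2 : rs 2 = 1 := by have := rs_even 0; rw [this, h1]
      norm_num [s, t, Finset.sum_range_succ, h0, h1, h2]
    · obtain ⟨k, rfl⟩ : ∃ k, m = k+1 := ⟨m-1, by omega⟩
      have key := ih hm
      have hs : s (2*(k+1+1)) = s (2*(k+1)) + rs (2*(k+1)+1) + rs (2*(k+1)+2) := by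
        simp [s, show 2*(k+1+1)+1 = (2*(k+1)+1)+1+1 from by ring, Finset.sum_range_succ]
      have hs2 : s (k+1+1) = s (k+1) + rs (k+1+1) := by
        simp [s, Finset.sum_range_succ]
      have ht : t (k+1) = t k + (-1)^(k+1) * rs (k+1) := by
        simp [t, Finset.sum_range_succ]
      simp only [Nat.add_sub_cancel] at key ⊢
      rw [show 2*(k+1)+2 = 2*(k+1)+2 from rfl] at hs
      rw [hs, key, hs2, ht, rs_odd (k+1), show 2*(k+1)+2 = 2*(k+1)+2 from rfl]
      rw [show (2*(k+1)+2) = 2*(k+1)+2 from rfl]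
      rw [show rs (2*(k+1)+2) = rs (k+1+1) from by
        have := rs_even (k+1); simpa using this]
      ring
end

section
/- For all n ≥ 0, s(2n+1) = s(n) + t(n), where s and t are the Rudin-Shapiro summatory functions. -/
theorem stmt1 : ∀ n : ℕ, s (2*n+1) = s n + t n := by
  intro n
  induction n with
  | zero => simp [s, t, Finset.sum_range_succ, rs_odd 0]
  | succ m ih =>
    have e1 : 2*(m+1)+1 = (2*m+1) + 1 + 1 := by ring
    have : s (2*(m+1)+1) = s (2*m+1) + rs (2*m+2) + rs (2*m+3) := by
      simp [s, e1, Finset.sum_range_succ]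
    rw [this, ih, rs_even m, show 2*m+3 = 2*(m+1)+1 by ring, rs_odd (m+1)]
    simp [s, t, Finset.sum_range_succ]
    ring
end

section
/- For all k ≥ 1, the minimum value of s(n) over n in the interval [4^k, 4^(k+1) − 1] is 2^k + 1, and this minimum is attained only at n = 4^k and n = (5·4^k − 2)/3. -/
lemma rs_two_mul (n : ℕ) : rs (2*n) = rs n := by
  match n with
  | 0 => norm_num
  | (m+1) =>
    rw [show 2*(m+1) = (2*m+1)+1 from by ring, rs]
    have : (2*m+1+1) % 2 = 0 := by omega
    rw [if_pos this]
    congr 1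
    omega

lemma rs_two_mul_add_one (n : ℕ) : rs (2*n+1) = (-1)^n * rs n := by
  match n with
  | 0 => norm_num [rs]
  | (m+1) =>
    rw [show 2*(m+1)+1 = (2*m+2)+1 from by ring, rs]
    have : (2*m+2+1) % 2 = 1 := by omega
    rw [if_neg (by omega)]
    have h2 : (2*m+2+1)/2 = m+1 := by omega
    rw [h2]

lemma s_succ (n : ℕ) : s (n+1) = s n + rs (n+1) := Finset.sum_range_succ _ _
lemma t_succ (n : ℕ) : t (n+1) = t n + (-1)^(n+1) * rs (n+1) := Finset.sum_range_succ _ _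

lemma st_odd (n : ℕ) : s (2*n+1) = s n + t n ∧ t (2*n+1) = s n - t n := by
  induction n with
  | zero => constructor <;> simp [s, t, Finset.sum_range_succ, rs]
  | succ m ih =>
    obtain ⟨h1, h2⟩ := ih
    have A1 : s (2*m+3) = s (2*m+2) + rs (2*m+3) := s_succ (2*m+2)
    have A2 : s (2*m+2) = s (2*m+1) + rs (2*m+2) := s_succ (2*m+1)
    have A3 : rs (2*m+2) = rs (m+1) := rs_two_mul (m+1)
    have A4 : rs (2*m+3) = (-1)^(m+1) * rs (m+1) := rs_two_mul_add_one (m+1)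
    have A5 : s (m+1) = s m + rs (m+1) := s_succ m
    have A6 : t (m+1) = t m + (-1)^(m+1) * rs (m+1) := t_succ m
    have T1 : t (2*m+3) = t (2*m+2) + (-1)^(2*m+3) * rs (2*m+3) := t_succ (2*m+2)
    have T2 : t (2*m+2) = t (2*m+1) + (-1)^(2*m+2) * rs (2*m+2) := t_succ (2*m+1)
    have hp1 : ((-1:ℤ))^(2*m+2) = 1 := Even.neg_one_pow ⟨m+1, by ring⟩
    have hp2 : ((-1:ℤ))^(2*m+3) = -1 := Odd.neg_one_pow ⟨m+1, by ring⟩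
    constructor
    · show s (2*m+3) = s (m+1) + t (m+1)
      rw [A1, A2, h1, A3, A4, A5, A6]; ring
    · show t (2*m+3) = s (m+1) - t (m+1)
      rw [T1, T2, h2, hp1, hp2, A3, A4, A5, A6]; ring

lemma s_odd (n : ℕ) : s (2*n+1) = s n + t n := (st_odd n).1
lemma t_odd (n : ℕ) : t (2*n+1) = s n - t n := (st_odd n).2

lemma s_four (n : ℕ) : s (4*n) = 2 * s n - rs n ∧ s (4*n+1) = 2 * s n ∧
    s (4*n+2) = 2 * s n + (-1)^n * rs n ∧ s (4*n+3) = 2 * s n := by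
  have e4 : 2*(2*n) = 4*n := by ring
  have h1 : s (4*n+1) = s (2*n) + t (2*n) := by have h := s_odd (2*n); rwa [e4] at h
  have h2 : s (4*n+1) = s (4*n) + rs (4*n+1) := s_succ (4*n)
  have h3 : s (4*n+2) = s (4*n+1) + rs (4*n+2) := s_succ (4*n+1)
  have h4 : s (4*n+3) = s (4*n+2) + rs (4*n+3) := s_succ (4*n+2)
  have h5 : rs (4*n+1) = (-1)^(2*n) * rs (2*n) := by have h := rs_two_mul_add_one (2*n); rwa [e4] at h
  have h6 : rs (4*n+2) = rs (2*n+1) := by have h := rs_two_mul (2*n+1); rwa [show 2*(2*n+1) = 4*n+2 from by ring] at h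
  have h7 : rs (4*n+3) = (-1)^(2*n+1) * rs (2*n+1) := by have h := rs_two_mul_add_one (2*n+1); rwa [show 2*(2*n+1)+1 = 4*n+3 from by ring] at h
  have h8 : rs (2*n) = rs n := rs_two_mul n
  have h9 : rs (2*n+1) = (-1)^n * rs n := rs_two_mul_add_one n
  have hp1 : ((-1:ℤ))^(2*n) = 1 := Even.neg_one_pow ⟨n, by ring⟩
  have hp2 : ((-1:ℤ))^(2*n+1) = -1 := Odd.neg_one_pow ⟨n, by ring⟩
  have hs : s (2*n) = s n + t n - (-1)^n * rs n := by
    have := s_odd n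
    have h := s_succ (2*n)
    rw [h9] at h; linarith
  have ht : t (2*n) = s n - t n + (-1)^n * rs n := by
    have := t_odd n
    have h : t (2*n+1) = t (2*n) + (-1)^(2*n+1) * rs (2*n+1) := t_succ (2*n)
    rw [h9, hp2] at h; linarith
  refine ⟨?_, ?_, ?_, ?_⟩
  · rw [h5, hp1, h8] at h2; rw [hs, ht] at h1; linarith
  · rw [hs, ht] at h1; linarith
  · rw [h3, h1, hs, ht, h6, h9]; ring
  · rw [h4, h3, h1, hs, ht, h6, h7, h9, hp2]; ring

lemma rs_pm (n : ℕ) : rs n = 1 ∨ rs n = -1 := by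
  induction n using Nat.strong_induction_on with
  | _ n ih =>
    match n with
    | 0 => left; rw [rs]
    | (m+1) =>
      rw [rs]
      have h := ih ((m+1)/2) (Nat.div_lt_self (Nat.succ_pos m) (by norm_num))
      rcases h with h | h <;> by_cases hm : (m+1) % 2 = 0 <;>
        rcases Nat.even_or_odd ((m+1)/2) with he | he <;>
        norm_num [hm, h, he.neg_one_pow]

lemma rs_pow4 (k : ℕ) : rs (4^k) = 1 := by
  induction k with
  | zero => norm_num [rs]
  | succ k ih =>
    have e : (4:ℕ)^(k+1) = 2*(2*4^k) := by ring
    rw [e, rs_two_mul, rs_two_mul, ih]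

lemma pow4_mod3 (k : ℕ) : 4^k % 3 = 1 := by
  rw [Nat.pow_mod]; norm_num

lemma rs_U (k : ℕ) (hk : 1 ≤ k) :
    (5*4^k-2)/3 % 2 = 0 ∧ rs ((5*4^k-2)/3) = -1 := by
  induction k, hk using Nat.le_induction with
  | base => norm_num [rs]
  | succ k hk ih =>
    obtain ⟨h1, h2⟩ := ih
    have hm := pow4_mod3 k
    have hm' := pow4_mod3 (k+1)
    have h4 : (4:ℕ)^(k+1) = 4*4^k := by ring
    have hp : (4:ℕ)^k ≥ 4 := by calc (4:ℕ)^k ≥ 4^1 := Nat.pow_le_pow_right (by norm_num) hk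
                                   _ = 4 := by norm_num
    have hu' : (5*4^(k+1)-2)/3 = 4*((5*4^k-2)/3) + 2 := by omega
    set u := (5*4^k-2)/3 with hu
    have heu : Even u := Nat.even_iff.mpr h1
    constructor
    · omega
    · rw [hu']
      have e : 4*u+2 = 2*(2*u+1) := by ring
      rw [e, rs_two_mul, rs_two_mul_add_one, heu.neg_one_pow, h2]; ring

theorem stmt11 : ∀ k : ℕ, 1 ≤ k →
    (∀ n : ℕ, 4^k ≤ n → n ≤ 4^(k+1) - 1 → (2^k + 1 : ℤ) ≤ s n) ∧
    (∀ n : ℕ, 4^k ≤ n → n ≤ 4^(k+1) - 1 →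
      (s n = 2^k + 1 ↔ n = 4^k ∨ n = (5 * 4^k - 2)/3)) := by
  intro k hk
  induction k, hk using Nat.le_induction with
  | base =>
    constructor <;> intro n h1 h2 <;> norm_num at h1 h2 ⊢ <;>
      interval_cases n <;> norm_num [s, Finset.sum_range_succ, rs]
  | succ k hk ih =>
    obtain ⟨ihb, ihe⟩ := ih
    have hm3 := pow4_mod3 k
    have h4 : (4:ℕ)^(k+1) = 4*4^k := by ring
    have h16 : (4:ℕ)^(k+2) = 16*4^k := by ring
    have hp : (4:ℕ)^k ≥ 4 := by
      calc (4:ℕ)^k ≥ 4^1 := Nat.pow_le_pow_right (by norm_num) hk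
        _ = 4 := by norm_num
    set u := (5*4^k-2)/3 with hu
    have hu3 : 3*u + 2 = 5*4^k := by omega
    have hu' : (5*4^(k+1)-2)/3 = 4*u + 2 := by
      have := pow4_mod3 (k+1); omega
    have hub1 : 4^k ≤ u := by omega
    have hub2 : u ≤ 4^(k+1) - 1 := by omega
    have hs4k : s (4^k) = 2^k + 1 := (ihe (4^k) le_rfl (by omega)).mpr (Or.inl rfl)
    have hsu : s u = 2^k + 1 := (ihe u hub1 hub2).mpr (Or.inr rfl)
    obtain ⟨hue, hrsu⟩ := rs_U k hk
    rw [← hu] at hue hrsu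
    have h2p : ((2:ℤ))^(k+1) = 2*2^k := by ring
    have hrs4 := rs_pow4 k
    have heps4 : ((-1:ℤ))^(4^k : ℕ) = 1 :=
      Even.neg_one_pow ((Nat.even_pow.mpr ⟨⟨2, rfl⟩, by omega⟩))
    have key : ∀ n : ℕ, 4^(k+1) ≤ n → n ≤ 4^(k+1+1) - 1 →
        ((2^(k+1) + 1 : ℤ) ≤ s n ∧
          (s n = 2^(k+1) + 1 → n = 4^(k+1) ∨ n = 4*u + 2)) := by
      intro n hn1 hn2
      set m := n / 4 with hm
      have hmb1 : 4^k ≤ m := by omega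
      have hmb2 : m ≤ 4^(k+1) - 1 := by omega
      have hsm := ihb m hmb1 hmb2
      obtain ⟨f0, f1, f2, f3⟩ := s_four m
      have hrsm := rs_pm m
      have heps : ((-1:ℤ))^m = 1 ∨ ((-1:ℤ))^m = -1 :=
        (Nat.even_or_odd m).elim (fun h => Or.inl h.neg_one_pow)
          (fun h => Or.inr h.neg_one_pow)
      have hcases : n = 4*m ∨ n = 4*m+1 ∨ n = 4*m+2 ∨ n = 4*m+3 := by omega
      have hmeq : s m = 2^k + 1 → m = 4^k ∨ m = u := fun h =>
        (ihe m hmb1 hmb2).mp h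
      rcases hcases with h | h | h | h
      · -- n = 4m, s n = 2 s m - rs m
        rw [h] at *
        rw [f0]
        rcases hrsm with hr | hr <;> rw [hr]
        · constructor
          · linarith
          · intro he
            have hsme : s m = 2^k + 1 := by linarith
            rcases hmeq hsme with h' | h'
            · left; omega
            · rw [h'] at hr; rw [hrsu] at hr; norm_num at hr
        · constructor
          · linarith
          · intro he; exfalso; linarith
      · rw [h] at *; rw [f1]
        exact ⟨by linarith, fun he => absurd he (by intro he; linarith)⟩
      · -- n = 4m+2
        rw [h] at *
        rw [f2]
        have hc : (-1:ℤ)^m * rs m = 1 ∨ (-1:ℤ)^m * rs m = -1 := by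
          rcases heps with h1 | h1 <;> rcases hrsm with h2 | h2 <;>
            rw [h1, h2] <;> norm_num
        rcases hc with hc | hc <;> rw [hc]
        · exact ⟨by linarith, fun he => absurd he (by intro he; linarith)⟩
        · constructor
          · linarith
          · intro he
            have hsme : s m = 2^k + 1 := by linarith
            rcases hmeq hsme with h' | h'
            · exfalso
              rw [h', hrs4, heps4] at hc; norm_num at hc
            · right; omega
      · rw [h] at *; rw [f3]
        exact ⟨by linarith, fun he => absurd he (by intro he; linarith)⟩
    constructor
    · intro n hn1 hn2; exact (key n hn1 hn2).1
    · intro n hn1 hn2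
      constructor
      · intro he
        rcases (key n hn1 hn2).2 he with h | h
        · left; exact h
        · right; omega
      · intro h
        rcases h with h | h
        · rw [h, h4]
          have := (s_four (4^k)).1
          rw [this, hs4k, hrs4]; ring
        · rw [h, hu']
          have := (s_four u).2.2.1
          have heu : Even u := Nat.even_iff.mpr hue
          rw [this, hsu, heu.neg_one_pow, hrsu]; ring
end
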